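/- Suppose ‖𝔄_{1+n}(t) f‖ ≤ n! e^{n+2} ‖f‖ holds for the (1+n)-th order cumulant on each n. Then for a sequence B⁰ in the Banach space L_γ(F_H) with norm ‖g‖ = max_{n≥0} (γⁿ/n!)‖g_n‖ and 0 < γ < e^{-1}, the solution B_s(t,Y) = ∑_{n=0}^{s} (1/n!) ∑_{j₁≠...≠j_n} 𝔄_{1+n}(t) B⁰_{s-n} satisfies ‖B(t)‖_{L_γ} ≤ e²(1−γe)^{-1} ‖B(0)‖_{L_γ}. -/

import Mathlib

open Finset in
lemma card_inj_fun (n s : ℕ) :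
    (Finset.univ.filter (fun j : Fin n → Fin s => Function.Injective j)).card
      = s.descFactorial n := by
  classical
  rw [← Fintype.card_subtype]
  rw [Fintype.card_congr (Equiv.subtypeInjectiveEquivEmbedding (Fin n) (Fin s))]
  simp [Fintype.card_embedding_eq]

/-- A priori estimate for the nonperturbative solution of the dual quantum BBGKY hierarchy:
if the `(1+n)`-th order cumulants satisfy `‖𝔄_{1+n}(t) f‖ ≤ n! e^{n+2} ‖f‖`, then for initial
data `B⁰` in the space `𝔏_γ` with norm `max_n (γⁿ/n!) ‖g_n‖` and `0 < γ < e⁻¹`, the solution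
`B_s(t) = ∑_{n=0}^{s} (1/n!) ∑_{j₁≠⋯≠j_n} 𝔄_{1+n}(t) B⁰_{s-n}` satisfies
`‖B(t)‖_{𝔏_γ} ≤ e² (1 - γe)⁻¹ ‖B(0)‖_{𝔏_γ}`. -/
theorem dual_BBGKY_solution_estimate
    (X : ℕ → Type*) [∀ n, NormedAddCommGroup (X n)] [∀ n, NormedSpace ℝ (X n)]
    (γ : ℝ) (hγ0 : 0 < γ) (hγ : γ < (Real.exp 1)⁻¹)
    -- the cumulant operator `𝔄_{1+n}(t)` acting on the variables `Y \ (j₁,…,j_n)`,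
    -- indexed by the choice of the (distinct) particle labels `j₁ ≠ … ≠ j_n`
    (A : ∀ s n : ℕ, (Fin n → Fin s) → (X (s - n) →L[ℝ] X s))
    (hA : ∀ s n (j : Fin n → Fin s), ‖A s n j‖ ≤ (n.factorial : ℝ) * Real.exp (n + 2))
    (B0 : ∀ n, X n) (M : ℝ)
    (hB0 : ∀ n : ℕ, γ ^ n / (n.factorial : ℝ) * ‖B0 n‖ ≤ M) :
    ∀ s : ℕ,
      γ ^ s / (s.factorial : ℝ) *
        ‖∑ n ∈ Finset.range (s + 1), ((n.factorial : ℝ))⁻¹ •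
            ∑ j ∈ Finset.univ.filter (fun j : Fin n → Fin s => Function.Injective j),
              A s n j (B0 (s - n))‖
        ≤ Real.exp 2 * (1 - γ * Real.exp 1)⁻¹ * M := by
  intro s
  have hM0 : 0 ≤ M := le_trans (norm_nonneg (B0 0)) (by simpa using hB0 0)
  set r : ℝ := γ * Real.exp 1 with hr
  have hr0 : 0 ≤ r := le_of_lt (mul_pos hγ0 (Real.exp_pos 1))
  have hr1 : r < 1 := by
    have := mul_lt_mul_of_pos_right hγ (Real.exp_pos 1)
    rwa [inv_mul_cancel₀ (ne_of_gt (Real.exp_pos 1))] at this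
  -- termwise bound
  have key : ∀ n ∈ Finset.range (s + 1),
      γ ^ s / (s.factorial : ℝ) *
        ‖((n.factorial : ℝ))⁻¹ •
            ∑ j ∈ Finset.univ.filter (fun j : Fin n → Fin s => Function.Injective j),
              A s n j (B0 (s - n))‖
      ≤ Real.exp 2 * r ^ n * M := by
    intro n hn
    have hns : n ≤ s := Nat.lt_succ_iff.mp (Finset.mem_range.mp hn)
    have hfac : ((s - n).factorial : ℝ) * (s.descFactorial n : ℝ) = (s.factorial : ℝ) := by
      exact_mod_cast congrArg (Nat.cast : ℕ → ℝ) (Nat.factorial_mul_descFactorial hns)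
    have hsum :
        ‖∑ j ∈ Finset.univ.filter (fun j : Fin n → Fin s => Function.Injective j),
            A s n j (B0 (s - n))‖
        ≤ (s.descFactorial n : ℝ) * ((n.factorial : ℝ) * Real.exp (n + 2) * ‖B0 (s - n)‖) := by
      calc ‖∑ j ∈ Finset.univ.filter (fun j : Fin n → Fin s => Function.Injective j),
            A s n j (B0 (s - n))‖
          ≤ ∑ j ∈ Finset.univ.filter (fun j : Fin n → Fin s => Function.Injective j),
            ‖A s n j (B0 (s - n))‖ := norm_sum_le _ _
        _ ≤ ∑ _j ∈ Finset.univ.filter (fun j : Fin n → Fin s => Function.Injective j),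
            ((n.factorial : ℝ) * Real.exp (n + 2) * ‖B0 (s - n)‖) := by
            refine Finset.sum_le_sum fun j _ => ?_
            calc ‖A s n j (B0 (s - n))‖ ≤ ‖A s n j‖ * ‖B0 (s - n)‖ :=
                  (A s n j).le_opNorm _
              _ ≤ (n.factorial : ℝ) * Real.exp (n + 2) * ‖B0 (s - n)‖ :=
                  mul_le_mul_of_nonneg_right (hA s n j) (norm_nonneg _)
        _ = (s.descFactorial n : ℝ) * ((n.factorial : ℝ) * Real.exp (n + 2) * ‖B0 (s - n)‖) := by
            rw [Finset.sum_const, card_inj_fun, nsmul_eq_mul]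
    have hγn : γ ^ s = γ ^ n * γ ^ (s - n) := by
      rw [← pow_add]; congr 1; omega
    have hexp : Real.exp (n + 2) = Real.exp 1 ^ n * Real.exp 2 := by
      rw [← Real.exp_nat_mul, ← Real.exp_add]; ring_nf
    have hfacpos : (0:ℝ) < (s.factorial : ℝ) := by exact_mod_cast s.factorial_pos
    have hnfacpos : (0:ℝ) < (n.factorial : ℝ) := by exact_mod_cast n.factorial_pos
    have hsnfacpos : (0:ℝ) < ((s - n).factorial : ℝ) := by exact_mod_cast (s - n).factorial_pos
    rw [norm_smul, norm_inv, Real.norm_natCast]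
    calc γ ^ s / (s.factorial : ℝ) * (((n.factorial : ℝ))⁻¹ *
          ‖∑ j ∈ Finset.univ.filter (fun j : Fin n → Fin s => Function.Injective j),
            A s n j (B0 (s - n))‖)
        ≤ γ ^ s / (s.factorial : ℝ) * (((n.factorial : ℝ))⁻¹ *
          ((s.descFactorial n : ℝ) * ((n.factorial : ℝ) * Real.exp (n + 2) * ‖B0 (s - n)‖))) := by
          refine mul_le_mul_of_nonneg_left (mul_le_mul_of_nonneg_left hsum ?_) ?_
          · positivity
          · positivity
      _ = Real.exp 2 * r ^ n *
          (γ ^ (s - n) / ((s - n).factorial : ℝ) * ‖B0 (s - n)‖) := by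
          have hd : (s.descFactorial n : ℝ) ≠ 0 := by
            intro h
            rw [h, mul_zero] at hfac
            exact hfacpos.ne' hfac.symm
          rw [hγn, hexp, hr, mul_pow, ← hfac]
          field_simp
      _ ≤ Real.exp 2 * r ^ n * M := by
          refine mul_le_mul_of_nonneg_left (hB0 (s - n)) ?_
          positivity
  calc γ ^ s / (s.factorial : ℝ) *
        ‖∑ n ∈ Finset.range (s + 1), ((n.factorial : ℝ))⁻¹ •
            ∑ j ∈ Finset.univ.filter (fun j : Fin n → Fin s => Function.Injective j),
              A s n j (B0 (s - n))‖
      ≤ γ ^ s / (s.factorial : ℝ) *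
        ∑ n ∈ Finset.range (s + 1), ‖((n.factorial : ℝ))⁻¹ •
            ∑ j ∈ Finset.univ.filter (fun j : Fin n → Fin s => Function.Injective j),
              A s n j (B0 (s - n))‖ := by
        refine mul_le_mul_of_nonneg_left (norm_sum_le _ _) ?_
        positivity
    _ = ∑ n ∈ Finset.range (s + 1), γ ^ s / (s.factorial : ℝ) *
        ‖((n.factorial : ℝ))⁻¹ •
            ∑ j ∈ Finset.univ.filter (fun j : Fin n → Fin s => Function.Injective j),
              A s n j (B0 (s - n))‖ := Finset.mul_sum _ _ _
    _ ≤ ∑ n ∈ Finset.range (s + 1), Real.exp 2 * r ^ n * M := Finset.sum_le_sum key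
    _ = Real.exp 2 * (∑ n ∈ Finset.range (s + 1), r ^ n) * M := by
        rw [Finset.mul_sum, Finset.sum_mul]
    _ ≤ Real.exp 2 * (1 - r)⁻¹ * M := by
        refine mul_le_mul_of_nonneg_right (mul_le_mul_of_nonneg_left ?_ (le_of_lt (Real.exp_pos 2))) hM0
        have hsum := Summable.sum_le_tsum (Finset.range (s + 1)) (fun n _ => pow_nonneg hr0 n)
          (summable_geometric_of_lt_one hr0 hr1)
        rwa [tsum_geometric_of_lt_one hr0 hr1] at hsum
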